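/- Let $0<p<1$, $l>0$, $x_e\ge 0$, and $0<h<k$. Let $f:(x_e,\infty)\to\mathbb{R}$ be concave and differentiable with $f'(x)>0$ and $\frac{h^{p-1}}{p}(x-x_e)^p\le f(x)\le \frac{h^{p-1}}{p}x^p$ for all $x>x_e$. Then there exists $x_3>x_e$ such that $f'(x)^{1/(p-1)}<kx+l$ for all $x>x_3$. -/

import Mathlib

open Real Set

/-- There is `c > 1` with `p*(c-1)*r < c^p - 1`, when `r < 1`, `0 < p`. -/
lemma stmt14_aux (p r : ℝ) (hp0 : 0 < p) (hr : r < 1) :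
    ∃ c : ℝ, 1 < c ∧ p * (c - 1) * r < c ^ p - 1 := by
  have hderiv : HasDerivAt (fun x : ℝ => x ^ p) p 1 := by
    simpa using Real.hasDerivAt_rpow_const (x := (1:ℝ)) (p := p) (Or.inl one_ne_zero)
  have hslope := hasDerivAt_iff_tendsto_slope.mp hderiv
  have hpr : p * r < p := by nlinarith
  have hev : ∀ᶠ c in nhdsWithin (1:ℝ) {(1:ℝ)}ᶜ, p * r < slope (fun x : ℝ => x ^ p) 1 c :=
    hslope.eventually (eventually_gt_nhds hpr)
  have hle : nhdsWithin (1:ℝ) (Ioi 1) ≤ nhdsWithin (1:ℝ) {(1:ℝ)}ᶜ := by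
    apply nhdsWithin_mono
    intro x hx
    exact ne_of_gt hx
  have hev2 : ∀ᶠ c in nhdsWithin (1:ℝ) (Ioi 1),
      p * r < slope (fun x : ℝ => x ^ p) 1 c := hle hev
  have hmem : ∀ᶠ c in nhdsWithin (1:ℝ) (Ioi 1), c ∈ Ioi (1:ℝ) :=
    eventually_mem_nhdsWithin
  obtain ⟨c, hc1, hc2⟩ := (hev2.and hmem).exists
  refine ⟨c, hc2, ?_⟩
  have hc1' : (0:ℝ) < c - 1 := by simpa using sub_pos.mpr (mem_Ioi.mp hc2)
  have : slope (fun x : ℝ => x ^ p) 1 c = (c ^ p - 1) / (c - 1) := by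
    simp [slope_def_field, Real.one_rpow]
  rw [this] at hc1
  rw [lt_div_iff₀ hc1'] at hc1
  nlinarith

/-- if `0 < h < k` and the concave differentiable `f` on `(x_e,∞)` has
positive derivative and satisfies `(h^(p-1)/p)(x-x_e)^p ≤ f(x) ≤ (h^(p-1)/p) x^p`, then
`f'(x)^(1/(p-1)) < k x + l` for all sufficiently large `x`. -/
theorem stmt_14 (p h k l xe : ℝ) (hp0 : 0 < p) (hp1 : p < 1) (hl : 0 < l) (hxe : 0 ≤ xe)
    (hh : 0 < h) (hhk : h < k)
    (f : ℝ → ℝ) (hconc : ConcaveOn ℝ (Ioi xe) f)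
    (hdiff : ∀ x ∈ Ioi xe, DifferentiableAt ℝ f x)
    (hpos : ∀ x ∈ Ioi xe, 0 < deriv f x)
    (hlow : ∀ x ∈ Ioi xe, h ^ (p - 1) / p * (x - xe) ^ p ≤ f x)
    (hup : ∀ x ∈ Ioi xe, f x ≤ h ^ (p - 1) / p * x ^ p) :
    ∃ x₃ : ℝ, xe < x₃ ∧ ∀ x : ℝ, x₃ < x → (deriv f x) ^ (1 / (p - 1)) < k * x + l := by
  have hk : 0 < k := hh.trans hhk
  have hp1' : p - 1 < 0 := by linarith
  set r : ℝ := (k / h) ^ (p - 1) with hrdef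
  have hkh : 1 < k / h := (one_lt_div hh).mpr hhk
  have hr1 : r < 1 := Real.rpow_lt_one_of_one_lt_of_neg hkh hp1'
  have hr0 : 0 < r := Real.rpow_pos_of_pos (by positivity) _
  obtain ⟨c, hc1, hcineq⟩ := stmt14_aux p r hp0 hr1
  have hc0 : 0 < c := lt_trans one_pos hc1
  -- tendsto (c - xe/x)^p → c^p
  have ht0 : Filter.Tendsto (fun x : ℝ => c - xe / x) Filter.atTop (nhds c) := by
    have : Filter.Tendsto (fun x : ℝ => xe / x) Filter.atTop (nhds 0) :=
      tendsto_const_nhds.div_atTop Filter.tendsto_id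
    simpa using tendsto_const_nhds.sub this
  have ht : Filter.Tendsto (fun x : ℝ => (c - xe / x) ^ p) Filter.atTop (nhds (c ^ p)) := by
    exact ((Real.continuousAt_rpow_const c p (Or.inl (ne_of_gt hc0))).tendsto).comp ht0
  have hev1 : ∀ᶠ x in Filter.atTop, p * (c - 1) * r + 1 < (c - xe / x) ^ p :=
    ht.eventually (eventually_gt_nhds (by linarith))
  have hev2 : ∀ᶠ x in Filter.atTop, xe < x := Filter.eventually_gt_atTop xe
  have hev3 : ∀ᶠ x in Filter.atTop, (0:ℝ) < x := Filter.eventually_gt_atTop 0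
  obtain ⟨x₃', hx₃'⟩ := ((hev1.and hev2).and hev3).exists_forall_of_atTop
  refine ⟨max x₃' (xe + 1), lt_max_of_lt_right (by linarith), ?_⟩
  intro x hx
  obtain ⟨⟨hx1, hx2⟩, hx3⟩ := hx₃' x (le_of_lt (lt_of_le_of_lt (le_max_left _ _) hx))
  -- key: deriv f x > (k*x)^(p-1)
  have hxIoi : x ∈ Ioi xe := hx2
  have hyIoi : c * x ∈ Ioi xe := by
    have : x < c * x := by nlinarith
    exact lt_trans hx2 this
  have hxy : x < c * x := by nlinarith
  have hslope := hconc.slope_le_deriv hxIoi hyIoi hxy (hdiff x hxIoi)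
  rw [slope_def_field] at hslope
  have hcxxe : 0 < c * x - xe := by
    have : x < c * x := hxy
    linarith
  -- lower bound on f(c*x) - f(x)
  have hfy := hlow (c * x) hyIoi
  have hfx := hup x hxIoi
  have hsplit : (c * x - xe) ^ p = x ^ p * (c - xe / x) ^ p := by
    rw [← Real.mul_rpow (le_of_lt hx3) (by
      rw [sub_nonneg, div_le_iff₀ hx3]; nlinarith)]
    congr 1
    field_simp
  have hp' : (0:ℝ) < h ^ (p - 1) / p := by positivity
  have hnum : h ^ (p-1) * r * (c - 1) * x ^ p < f (c * x) - f x := by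
    have h1 : h ^ (p - 1) / p * ((c * x - xe) ^ p - x ^ p) ≤ f (c * x) - f x := by
      have := hlow (c * x) hyIoi
      have := hup x hxIoi
      nlinarith
    have h2 : h ^ (p-1) * r * (c - 1) * x ^ p <
        h ^ (p - 1) / p * ((c * x - xe) ^ p - x ^ p) := by
      rw [hsplit]
      have hxp : (0:ℝ) < x ^ p := Real.rpow_pos_of_pos hx3 p
      have : p * (c - 1) * r + 1 < (c - xe / x) ^ p := hx1
      have hhp : (0:ℝ) < h ^ (p-1) := Real.rpow_pos_of_pos hh _
      rw [div_mul_eq_mul_div, lt_div_iff₀ hp0]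
      have key := mul_lt_mul_of_pos_left hx1 (mul_pos hhp hxp)
      nlinarith [key]
    linarith
  -- from slope inequality
  have hcx1 : 0 < c * x - x := by linarith
  have hd : h ^ (p-1) * r * x ^ (p-1) < deriv f x := by
    have hc' : c * x - x = (c - 1) * x := by ring
    have h3 : h ^ (p-1) * r * (c - 1) * x ^ p / (c * x - x) < deriv f x := by
      calc h ^ (p-1) * r * (c - 1) * x ^ p / (c * x - x)
          < (f (c*x) - f x) / (c * x - x) := by gcongr
        _ ≤ deriv f x := hslope
    have hxpe : x ^ p = x ^ (p-1) * x := by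
      nth_rewrite 1 [show p = (p-1)+1 by ring]
      exact Real.rpow_add_one (ne_of_gt hx3) _
    have heq : h ^ (p-1) * r * (c - 1) * x ^ p / (c * x - x) = h ^ (p-1) * r * x ^ (p-1) := by
      rw [hc', hxpe]
      field_simp [(sub_pos.mpr hc1).ne', (ne_of_gt hx3)]
    rwa [heq] at h3
  have hhr : h ^ (p-1) * r = k ^ (p-1) := by
    rw [hrdef, Real.div_rpow (le_of_lt hk) (le_of_lt hh)]
    field_simp
  have hkx : (k * x) ^ (p-1) = k ^ (p-1) * x ^ (p-1) :=
    Real.mul_rpow (le_of_lt hk) (le_of_lt hx3)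
  have hd2 : (k * x + l) ^ (p-1) < deriv f x := by
    have h4 : (k * x + l) ^ (p-1) < (k * x) ^ (p-1) :=
      Real.rpow_lt_rpow_of_neg (by positivity) (by linarith) hp1'
    rw [hkx, ← hhr] at h4
    linarith
  -- conclude
  have hkl : (0:ℝ) < k * x + l := by positivity
  have hbase : (0:ℝ) < (k * x + l) ^ (p-1) := Real.rpow_pos_of_pos hkl _
  have h5 : (deriv f x) ^ (1/(p-1)) < ((k * x + l) ^ (p-1)) ^ (1/(p-1)) :=
    Real.rpow_lt_rpow_of_neg hbase hd2 (by
      apply div_neg_of_pos_of_neg one_pos hp1')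
  calc (deriv f x) ^ (1/(p-1)) < ((k * x + l) ^ (p-1)) ^ (1/(p-1)) := h5
    _ = k * x + l := by
      rw [← Real.rpow_mul (le_of_lt hkl), mul_one_div_cancel (ne_of_lt hp1'), Real.rpow_one]
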